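/- Let G be an order automorphism of ℝ × ℝ (product order) with G(0,0) = (0,0), and suppose there are functions u, v : ℝ → ℝ with G(x,0) = (u(x),0) and G(0,y) = (0,v(y)) for all x, y. Then G(x,y) = (u(x), v(y)) for all (x,y) ∈ ℝ². -/

import Mathlib

theorem stmt_10 (G : ℝ × ℝ → ℝ × ℝ)
    (hsurj : Function.Surjective G)
    (hiff : ∀ p q : ℝ × ℝ, p ≤ q ↔ G p ≤ G q)
    (hO : G (0, 0) = (0, 0))
    (u v : ℝ → ℝ)
    (hu : ∀ x : ℝ, G (x, 0) = (u x, 0))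
    (hv : ∀ y : ℝ, G (0, y) = (0, v y)) :
    ∀ x y : ℝ, G (x, y) = (u x, v y) := by
  have hle : ∀ p q : ℝ × ℝ, p ≤ q → G p ≤ G q := fun p q h => (hiff p q).1 h
  have hinj : Function.Injective G := fun p q h =>
    le_antisymm ((hiff p q).2 h.le) ((hiff q p).2 h.ge)
  have hu0 : u 0 = 0 := by
    have h := (hu 0).symm.trans hO
    exact (Prod.ext_iff.1 h).1
  have hv0 : v 0 = 0 := by
    have h := (hv 0).symm.trans hO
    exact (Prod.ext_iff.1 h).2
  have umono : ∀ x x' : ℝ, x ≤ x' → u x ≤ u x' := by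
    intro x x' h
    have h1 : ((x : ℝ), (0 : ℝ)) ≤ (x', 0) := Prod.mk_le_mk.2 ⟨h, le_refl 0⟩
    have h2 := hle _ _ h1
    rw [hu, hu] at h2
    exact (Prod.mk_le_mk.1 h2).1
  have vmono : ∀ y y' : ℝ, y ≤ y' → v y ≤ v y' := by
    intro y y' h
    have h1 : ((0 : ℝ), y) ≤ (0, y') := Prod.mk_le_mk.2 ⟨le_refl 0, h⟩
    have h2 := hle _ _ h1
    rw [hv, hv] at h2
    exact (Prod.mk_le_mk.1 h2).2
  have vzero : ∀ d : ℝ, v d = 0 → d = 0 := by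
    intro d hd
    have : G (0, d) = G (0, 0) := by rw [hv, hd, hO]
    exact ((Prod.ext_iff.1 (hinj this)).2 : d = 0)
  have hsup : ∀ p q : ℝ × ℝ, G (p ⊔ q) = G p ⊔ G q := by
    intro p q
    obtain ⟨r, hr⟩ := hsurj (G p ⊔ G q)
    have h1 : p ≤ r := (hiff p r).2 (by rw [hr]; exact le_sup_left)
    have h2 : q ≤ r := (hiff q r).2 (by rw [hr]; exact le_sup_right)
    have h3 : G (p ⊔ q) ≤ G p ⊔ G q := by
      rw [← hr]; exact hle _ _ (sup_le h1 h2)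
    have h4 : G p ⊔ G q ≤ G (p ⊔ q) :=
      sup_le (hle _ _ le_sup_left) (hle _ _ le_sup_right)
    exact le_antisymm h3 h4
  have hinf : ∀ p q : ℝ × ℝ, G (p ⊓ q) = G p ⊓ G q := by
    intro p q
    obtain ⟨r, hr⟩ := hsurj (G p ⊓ G q)
    have h1 : r ≤ p := (hiff r p).2 (by rw [hr]; exact inf_le_left)
    have h2 : r ≤ q := (hiff r q).2 (by rw [hr]; exact inf_le_right)
    have h3 : G p ⊓ G q ≤ G (p ⊓ q) := by
      rw [← hr]; exact hle _ _ (le_inf h1 h2)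
    have h4 : G (p ⊓ q) ≤ G p ⊓ G q :=
      le_inf (hle _ _ inf_le_left) (hle _ _ inf_le_right)
    exact le_antisymm h4 h3
  have usurj : ∀ t : ℝ, ∃ s : ℝ, u s = t := by
    intro t
    obtain ⟨⟨c, d⟩, hp⟩ := hsurj (t, 0)
    rcases le_total 0 t with ht | ht
    · -- use join with (0,0)
      have hq : G ((c, d) ⊔ (0, 0)) = (t, 0) := by
        rw [hsup, hp, hO]
        simp [Prod.ext_iff, max_eq_left ht]
      have hqq : ((c, d) : ℝ × ℝ) ⊔ (0, 0) = (max c 0, max d 0) := rfl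
      rw [hqq] at hq
      have hd0 : max d 0 = 0 := by
        have h1 : ((0 : ℝ), max d 0) ≤ (max c 0, max d 0) :=
          Prod.mk_le_mk.2 ⟨le_max_right c 0, le_refl _⟩
        have h2 := hle _ _ h1
        rw [hv, hq] at h2
        have h3 : v (max d 0) ≤ 0 := (Prod.mk_le_mk.1 h2).2
        have h4 : 0 ≤ v (max d 0) := by
          have := vmono 0 (max d 0) (le_max_right d 0)
          rwa [hv0] at this
        exact vzero _ (le_antisymm h3 h4)
      rw [hd0] at hq
      rw [hu] at hq
      exact ⟨max c 0, (Prod.ext_iff.1 hq).1⟩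
    · have hq : G ((c, d) ⊓ (0, 0)) = (t, 0) := by
        rw [hinf, hp, hO]
        simp [Prod.ext_iff, min_eq_left ht]
      have hqq : ((c, d) : ℝ × ℝ) ⊓ (0, 0) = (min c 0, min d 0) := rfl
      rw [hqq] at hq
      have hd0 : min d 0 = 0 := by
        have h1 : ((min c 0 : ℝ), min d 0) ≤ (0, min d 0) :=
          Prod.mk_le_mk.2 ⟨min_le_right c 0, le_refl _⟩
        have h2 := hle _ _ h1
        rw [hv, hq] at h2
        have h3 : 0 ≤ v (min d 0) := (Prod.mk_le_mk.1 h2).2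
        have h4 : v (min d 0) ≤ 0 := by
          have := vmono (min d 0) 0 (min_le_right d 0)
          rwa [hv0] at this
        exact vzero _ (le_antisymm h4 h3)
      rw [hd0] at hq
      rw [hu] at hq
      exact ⟨min c 0, (Prod.ext_iff.1 hq).1⟩
  have vsurj : ∀ t : ℝ, ∃ s : ℝ, v s = t := by
    intro t
    obtain ⟨⟨c, d⟩, hp⟩ := hsurj (0, t)
    have uzero : ∀ e : ℝ, u e = 0 → e = 0 := by
      intro e he
      have : G (e, 0) = G (0, 0) := by rw [hu, he, hO]
      exact ((Prod.ext_iff.1 (hinj this)).1 : e = 0)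
    rcases le_total 0 t with ht | ht
    · have hq : G ((c, d) ⊔ (0, 0)) = (0, t) := by
        rw [hsup, hp, hO]
        simp [Prod.ext_iff, max_eq_left ht]
      have hqq : ((c, d) : ℝ × ℝ) ⊔ (0, 0) = (max c 0, max d 0) := rfl
      rw [hqq] at hq
      have hc0 : max c 0 = 0 := by
        have h1 : ((max c 0 : ℝ), 0) ≤ (max c 0, max d 0) :=
          Prod.mk_le_mk.2 ⟨le_refl _, le_max_right d 0⟩
        have h2 := hle _ _ h1
        rw [hu, hq] at h2
        have h3 : u (max c 0) ≤ 0 := (Prod.mk_le_mk.1 h2).1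
        have h4 : 0 ≤ u (max c 0) := by
          have := umono 0 (max c 0) (le_max_right c 0)
          rwa [hu0] at this
        exact uzero _ (le_antisymm h3 h4)
      rw [hc0] at hq
      rw [hv] at hq
      exact ⟨max d 0, (Prod.ext_iff.1 hq).2⟩
    · have hq : G ((c, d) ⊓ (0, 0)) = (0, t) := by
        rw [hinf, hp, hO]
        simp [Prod.ext_iff, min_eq_left ht]
      have hqq : ((c, d) : ℝ × ℝ) ⊓ (0, 0) = (min c 0, min d 0) := rfl
      rw [hqq] at hq
      have hc0 : min c 0 = 0 := by
        have h1' : ((min c 0 : ℝ), min d 0) ≤ (min c 0, 0) :=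
          Prod.mk_le_mk.2 ⟨le_refl _, min_le_right d 0⟩
        have h2 := hle _ _ h1'
        rw [hu, hq] at h2
        have h3 : 0 ≤ u (min c 0) := (Prod.mk_le_mk.1 h2).1
        have h4 : u (min c 0) ≤ 0 := by
          have := umono (min c 0) 0 (min_le_right c 0)
          rwa [hu0] at this
        exact uzero _ (le_antisymm h4 h3)
      rw [hc0] at hq
      rw [hv] at hq
      exact ⟨min d 0, (Prod.ext_iff.1 hq).2⟩
  -- main proof
  intro x y
  obtain ⟨a, b, hab⟩ : ∃ a b : ℝ, G (x, y) = (a, b) := ⟨(G (x, y)).1, (G (x, y)).2, rfl⟩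
  rw [hab]
  have ha : a = u x := by
    rcases le_total 0 y with hy | hy
    · have h1 : ((x : ℝ), 0) ≤ (x, y) := Prod.mk_le_mk.2 ⟨le_refl x, hy⟩
      have h2 := hle _ _ h1
      rw [hu, hab] at h2
      obtain ⟨hux, hb⟩ := Prod.mk_le_mk.1 h2
      obtain ⟨s, hs⟩ := usurj a
      have h3 : G (s, 0) ≤ G (x, y) := by
        rw [hu, hab, hs]
        exact Prod.mk_le_mk.2 ⟨le_refl a, hb⟩
      have h4 : s ≤ x := (Prod.mk_le_mk.1 ((hiff _ _).2 h3)).1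
      have h5 : u s ≤ u x := umono _ _ h4
      rw [hs] at h5
      exact le_antisymm h5 hux
    · have h1 : ((x : ℝ), y) ≤ (x, 0) := Prod.mk_le_mk.2 ⟨le_refl x, hy⟩
      have h2 := hle _ _ h1
      rw [hu, hab] at h2
      obtain ⟨hux, hb⟩ := Prod.mk_le_mk.1 h2
      obtain ⟨s, hs⟩ := usurj a
      have h3 : G (x, y) ≤ G (s, 0) := by
        rw [hu, hab, hs]
        exact Prod.mk_le_mk.2 ⟨le_refl a, hb⟩
      have h4 : x ≤ s := (Prod.mk_le_mk.1 ((hiff _ _).2 h3)).1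
      have h5 : u x ≤ u s := umono _ _ h4
      rw [hs] at h5
      exact le_antisymm hux h5
  have hb : b = v y := by
    rcases le_total 0 x with hx | hx
    · have h1 : ((0 : ℝ), y) ≤ (x, y) := Prod.mk_le_mk.2 ⟨hx, le_refl y⟩
      have h2 := hle _ _ h1
      rw [hv, hab] at h2
      obtain ⟨ha', hvy⟩ := Prod.mk_le_mk.1 h2
      obtain ⟨r, hr⟩ := vsurj b
      have h3 : G (0, r) ≤ G (x, y) := by
        rw [hv, hab, hr]
        exact Prod.mk_le_mk.2 ⟨ha', le_refl b⟩
      have h4 : r ≤ y := (Prod.mk_le_mk.1 ((hiff _ _).2 h3)).2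
      have h5 : v r ≤ v y := vmono _ _ h4
      rw [hr] at h5
      exact le_antisymm h5 hvy
    · have h1 : ((x : ℝ), y) ≤ (0, y) := Prod.mk_le_mk.2 ⟨hx, le_refl y⟩
      have h2 := hle _ _ h1
      rw [hv, hab] at h2
      obtain ⟨ha', hvy⟩ := Prod.mk_le_mk.1 h2
      obtain ⟨r, hr⟩ := vsurj b
      have h3 : G (x, y) ≤ G (0, r) := by
        rw [hv, hab, hr]
        exact Prod.mk_le_mk.2 ⟨ha', le_refl b⟩
      have h4 : y ≤ r := (Prod.mk_le_mk.1 ((hiff _ _).2 h3)).2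
      have h5 : v y ≤ v r := vmono _ _ h4
      rw [hr] at h5
      exact le_antisymm hvy h5
  rw [ha, hb]
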